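/- Fuglede–Putnam theorem: if M and N are bounded normal operators on Hilbert spaces H and K respectively, and T : K → H is a bounded operator satisfying M T = T N, then M* T = T N*. -/

import Mathlib

open ContinuousLinearMap NormedSpace
open scoped InnerProductSpace

section FPAux

variable {H K : Type*}
    [NormedAddCommGroup H] [InnerProductSpace ℂ H] [CompleteSpace H]
    [NormedAddCommGroup K] [InnerProductSpace ℂ K] [CompleteSpace K]

lemma FP.pow_intertwine (A : H →L[ℂ] H) (B : K →L[ℂ] K) (T : K →L[ℂ] H)
    (h : A ∘L T = T ∘L B) (n : ℕ) : (A ^ n) ∘L T = T ∘L (B ^ n) := by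
  induction n with
  | zero => ext x; simp
  | succ n ih =>
    ext x
    have h' : ∀ y, A (T y) = T (B y) := fun y => congrFun (congrArg DFunLike.coe h) y
    have ih' : ∀ y, (A ^ n) (T y) = T ((B ^ n) y) :=
      fun y => congrFun (congrArg DFunLike.coe ih) y
    simp only [comp_apply, pow_succ, mul_apply_eq_comp, h', ih']

lemma FP.exp_intertwine (A : H →L[ℂ] H) (B : K →L[ℂ] K) (T : K →L[ℂ] H)
    (h : A ∘L T = T ∘L B) : exp A ∘L T = T ∘L exp B := by
  have hA : Summable fun n : ℕ => ((n.factorial : ℂ))⁻¹ • A ^ n := expSeries_summable' A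
  have hB : Summable fun n : ℕ => ((n.factorial : ℂ))⁻¹ • B ^ n := expSeries_summable' B
  have L : exp A ∘L T = ∑' n : ℕ, (((n.factorial : ℂ))⁻¹ • A ^ n) ∘L T := by
    rw [exp_eq_tsum ℂ]
    exact ((compL ℂ K H H).flip T).map_tsum hA
  have R : T ∘L exp B = ∑' n : ℕ, T ∘L (((n.factorial : ℂ))⁻¹ • B ^ n) := by
    rw [exp_eq_tsum ℂ]
    exact (compL ℂ K K H T).map_tsum hB
  rw [L, R]
  exact tsum_congr fun n => by
    rw [smul_comp, comp_smul, FP.pow_intertwine A B T h n]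

lemma FP.exp_neg_comp (A : H →L[ℂ] H) : exp (-A) ∘L exp A = 1 := by
  let _ : NormedAlgebra ℚ (H →L[ℂ] H) := .restrictScalars ℚ ℂ _
  rw [← ContinuousLinearMap.mul_def, ← exp_add_of_commute (Commute.refl A).neg_left,
    neg_add_cancel, exp_zero]

lemma FP.exp_neg_apply (A : H →L[ℂ] H) (x : H) : exp (-A) (exp A x) = x := by
  rw [← ContinuousLinearMap.comp_apply, FP.exp_neg_comp A, one_apply_eq_self]

lemma FP.norm_exp_skew_le (A : H →L[ℂ] H) (hA : star A = -A) : ‖exp A‖ ≤ 1 := by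
  have hadj : ContinuousLinearMap.adjoint (exp A) = exp (-A) := by
    rw [← star_eq_adjoint, star_exp, hA]
  have key : ∀ x : H, ‖exp A x‖ = ‖x‖ := by
    intro x
    have h1 : ⟪exp A x, exp A x⟫_ℂ = ⟪x, x⟫_ℂ := by
      rw [← ContinuousLinearMap.adjoint_inner_right (exp A) x (exp A x), hadj,
        FP.exp_neg_apply]
    rw [@norm_eq_sqrt_re_inner ℂ, @norm_eq_sqrt_re_inner ℂ _ _ _ _ x, h1]
  exact opNorm_le_bound _ zero_le_one fun x => by rw [key x, one_mul]

end FPAux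

/-- Fuglede–Putnam theorem: if `M`, `N` are normal and `M T = T N`, then `M* T = T N*`. -/
theorem stmt_4 {H K : Type*}
    [NormedAddCommGroup H] [InnerProductSpace ℂ H] [CompleteSpace H]
    [NormedAddCommGroup K] [InnerProductSpace ℂ K] [CompleteSpace K]
    (M : H →L[ℂ] H) (N : K →L[ℂ] K) (T : K →L[ℂ] H)
    (hM : M ∘L ContinuousLinearMap.adjoint M = ContinuousLinearMap.adjoint M ∘L M)
    (hN : N ∘L ContinuousLinearMap.adjoint N = ContinuousLinearMap.adjoint N ∘L N)
    (hMTN : M ∘L T = T ∘L N) :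
    ContinuousLinearMap.adjoint M ∘L T = T ∘L ContinuousLinearMap.adjoint N := by
  set M' := ContinuousLinearMap.adjoint M with hM'def
  set N' := ContinuousLinearMap.adjoint N with hN'def
  have hstarM : star M = M' := star_eq_adjoint M
  have hstarN : star N = N' := star_eq_adjoint N
  have hstarM' : star M' = M := by rw [hM'def, ← star_eq_adjoint, star_star]
  have hstarN' : star N' = N := by rw [hN'def, ← star_eq_adjoint, star_star]
  have hcomm : Commute M' M := hM.symm
  have hcommN : Commute N N' := hN
  -- the entire function
  set f : ℂ → (K →L[ℂ] H) := fun z =>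
    exp (z • M') ∘L (T ∘L exp (z • (-N'))) with hfdef
  -- pointwise identity used for the bound and the conclusion
  have hw : ∀ w : ℂ, exp (w • M) ∘L T = T ∘L exp (w • N) := fun w =>
    FP.exp_intertwine _ _ _ (by rw [smul_comp, comp_smul, hMTN])
  have hw' : ∀ (w : ℂ) (y : K), exp (w • M) (T y) = T (exp (w • N) y) := fun w y =>
    congrFun (congrArg DFunLike.coe (hw w)) y
  -- key factorization
  have key : ∀ z : ℂ, f z =
      exp (z • M' + -((star z) • M)) ∘L
        (T ∘L exp ((star z) • N + -(z • N'))) := by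
    intro z
    set w := star z with hwdef
    have step1 : f z = (exp (z • M') ∘L exp (-(w • M))) ∘L
        (T ∘L (exp (w • N) ∘L exp (-(z • N')))) := by
      ext x
      simp only [hfdef, comp_apply, smul_neg]
      rw [← hw' w, FP.exp_neg_apply]
    let _ : NormedAlgebra ℚ (H →L[ℂ] H) := .restrictScalars ℚ ℂ _
    let _ : NormedAlgebra ℚ (K →L[ℂ] K) := .restrictScalars ℚ ℂ _
    have c1 : Commute (z • M') (-(w • M)) := ((hcomm.smul_left z).smul_right w).neg_right
    have c2 : Commute (w • N) (-(z • N')) := ((hcommN.smul_left w).smul_right z).neg_right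
    rw [step1, ← ContinuousLinearMap.mul_def (exp (z • M')),
      ← exp_add_of_commute c1, ← ContinuousLinearMap.mul_def (exp (w • N)),
      ← exp_add_of_commute c2]
  -- boundedness
  have hbound : ∀ z : ℂ, ‖f z‖ ≤ ‖T‖ := by
    intro z
    rw [key z]
    have s1 : star (z • M' + -((star z) • M)) = -(z • M' + -((star z) • M)) := by
      simp only [star_add, star_neg, star_smul, hstarM, hstarM', star_star]
      abel
    have s2 : star ((star z) • N + -(z • N')) = -((star z) • N + -(z • N')) := by
      simp only [star_add, star_neg, star_smul, hstarN, hstarN', star_star]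
      abel
    have b1 := FP.norm_exp_skew_le _ s1
    have b2 := FP.norm_exp_skew_le _ s2
    calc ‖exp (z • M' + -((star z) • M)) ∘L
          (T ∘L exp ((star z) • N + -(z • N')))‖
        ≤ ‖exp (z • M' + -((star z) • M))‖ *
            (‖T‖ * ‖exp ((star z) • N + -(z • N'))‖) :=
          (opNorm_comp_le _ _).trans
            (mul_le_mul_of_nonneg_left (opNorm_comp_le _ _) (norm_nonneg _))
      _ ≤ 1 * (‖T‖ * 1) := by
          refine mul_le_mul b1 ?_ (by positivity) zero_le_one
          exact mul_le_mul_of_nonneg_left b2 (norm_nonneg T)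
      _ = ‖T‖ := by ring
  -- differentiability
  have d1 : Differentiable ℂ fun z : ℂ => exp (z • M') := fun t =>
    (hasDerivAt_exp_smul_const M' t).differentiableAt
  have d2 : Differentiable ℂ fun z : ℂ => exp (z • (-N')) := fun t =>
    (hasDerivAt_exp_smul_const (-N') t).differentiableAt
  have hdiff : Differentiable ℂ f := d1.clm_comp ((differentiable_const T).clm_comp d2)
  -- Liouville
  have hbd : Bornology.IsBounded (Set.range f) := by
    rw [isBounded_iff_forall_norm_le]
    exact ⟨‖T‖, by rintro y ⟨z, rfl⟩; exact hbound z⟩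
  have hconst : ∀ z : ℂ, f z = T := by
    intro z
    have h0 : f 0 = T := by
      ext x
      simp [hfdef, exp_zero]
    rw [← h0]
    exact hdiff.apply_eq_apply_of_bounded hbd z 0
  -- from constancy: exp(z M') T = T exp(z N')
  have hmain : ∀ z : ℂ, exp (z • M') ∘L T = T ∘L exp (z • N') := by
    intro z
    have h1 := congrArg (fun X : K →L[ℂ] H => X ∘L exp (z • N')) (hconst z)
    simp only [hfdef] at h1
    rw [← h1]
    ext x
    simp only [comp_apply, smul_neg]
    rw [FP.exp_neg_apply]
  -- differentiate at 0
  have hder1 : HasDerivAt (fun z : ℂ => exp (z • M') ∘L T) (M' ∘L T) 0 := by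
    have h0 : HasDerivAt (fun u : ℂ => exp (u • M')) M' 0 := by
      simpa using hasDerivAt_exp_smul_const (𝕂 := ℂ) M' 0
    exact ((compL ℂ K H H).flip T).hasFDerivAt.comp_hasDerivAt 0 h0
  have hder2 : HasDerivAt (fun z : ℂ => T ∘L exp (z • N')) (T ∘L N') 0 := by
    have h0 : HasDerivAt (fun u : ℂ => exp (u • N')) N' 0 := by
      simpa using hasDerivAt_exp_smul_const (𝕂 := ℂ) N' 0
    exact (compL ℂ K K H T).hasFDerivAt.comp_hasDerivAt 0 h0
  have hder1' : HasDerivAt (fun z : ℂ => exp (z • M') ∘L T) (T ∘L N') 0 := by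
    have : (fun z : ℂ => exp (z • M') ∘L T) = fun z : ℂ => T ∘L exp (z • N') :=
      funext hmain
    rw [this]; exact hder2
  exact hder1.unique hder1'
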